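/- Fix t > 0 and θ ∈ ℍ, and consider the entire function F(ζ) = (ζ − θ)·cos ζ − t·sin ζ. Then: (1) F has infinitely many zeros in ℂ; (2) F has exactly one zero ζ₀ in ℍ; (3) this zero is simple, i.e. F'(ζ₀) ≠ 0. In particular, the equation ζ − t·tan ζ = θ has a unique solution in ℍ and infinitely many solutions in ℂ ∖ ℍ. -/

import Mathlib

open Complex Metric Set Real NNReal

noncomputable section
namespace Stmt15Aux

lemma key_identity (t : ℝ) (θ ζ : ℂ) :
    (t - I*(ζ-θ)) * Complex.exp (2*I*ζ) - (t + I*(ζ-θ))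
      = (-2*I*Complex.exp (ζ*I)) * ((ζ - θ) * Complex.cos ζ - t * Complex.sin ζ) := by
  have h1 : Complex.exp (ζ*I) * Complex.exp (-ζ*I) = 1 := by
    rw [← Complex.exp_add]; simp
  have h2 : Complex.exp (2*I*ζ) = Complex.exp (ζ*I) * Complex.exp (ζ*I) := by
    rw [← Complex.exp_add]; congr 1; ring
  rw [Complex.cos, Complex.sin]
  linear_combination (t - I*(ζ-θ))*h2 + (t + I*(ζ-θ))*h1 + ((t:ℂ)*Complex.exp (ζ*I)^2 - t*Complex.exp (ζ*I)*Complex.exp (-ζ*I))*Complex.I_sq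

lemma zero_iff (t : ℝ) (θ ζ : ℂ) :
    (ζ - θ) * Complex.cos ζ - t * Complex.sin ζ = 0 ↔
      (t - I*(ζ-θ)) * Complex.exp (2*I*ζ) = t + I*(ζ-θ) := by
  rw [← sub_eq_zero (a := (t - I*(ζ-θ)) * Complex.exp (2*I*ζ)), key_identity]
  simp [Complex.exp_ne_zero, sub_eq_zero, Complex.I_ne_zero]



/-- Möbius map of the unit disc -/
def mob (a z : ℂ) : ℂ := (a - z) / (1 - (starRingEnd ℂ) a * z)

lemma mob_den_ne {a z : ℂ} (ha : ‖a‖ < 1) (hz : ‖z‖ < 1) :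
    1 - (starRingEnd ℂ) a * z ≠ 0 := by
  intro h
  have h2 : (starRingEnd ℂ) a * z = 1 := by linear_combination -h
  have : ‖(starRingEnd ℂ) a * z‖ < 1 := by
    rw [norm_mul, RCLike.norm_conj]
    nlinarith [norm_nonneg a, norm_nonneg z]
  rw [h2] at this; simp at this

lemma normSq_lt_one {z : ℂ} (hz : ‖z‖ < 1) : normSq z < 1 := by
  rw [← Complex.sq_norm]
  nlinarith [norm_nonneg z, hz]

lemma mob_mem {a z : ℂ} (ha : ‖a‖ < 1) (hz : ‖z‖ < 1) : ‖mob a z‖ < 1 := by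
  have hd := mob_den_ne ha hz
  rw [mob, norm_div]
  rw [div_lt_one (norm_pos_iff.2 hd)]
  have h1 : normSq (a - z) < normSq (1 - (starRingEnd ℂ) a * z) := by
    have ha' := normSq_lt_one ha
    have hz' := normSq_lt_one hz
    simp only [normSq_apply, sub_re, sub_im, mul_re, mul_im, conj_re, conj_im,
      one_re, one_im] at *
    nlinarith [mul_pos (sub_pos.2 ha') (sub_pos.2 hz')]
  have e1 : ‖a - z‖^2 = normSq (a - z) := by rw [Complex.sq_norm]
  have e2 : ‖1 - (starRingEnd ℂ) a * z‖^2 = normSq (1 - (starRingEnd ℂ) a * z) := by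
    rw [Complex.sq_norm]
  apply lt_of_pow_lt_pow_left₀ 2 (norm_nonneg _)
  rw [e1, e2]; exact h1

lemma mob_self (a : ℂ) : mob a a = 0 := by simp [mob]

lemma mob_invol {a z : ℂ} (ha : ‖a‖ < 1) (hz : ‖z‖ < 1) : mob a (mob a z) = z := by
  have hd := mob_den_ne ha hz
  have hA : 1 - (starRingEnd ℂ) a * a ≠ 0 := mob_den_ne ha ha
  have hden2 : 1 - (starRingEnd ℂ) a * (mob a z) =
      (1 - (starRingEnd ℂ) a * a) / (1 - (starRingEnd ℂ) a * z) := by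
    rw [mob]; field_simp; ring
  rw [mob, hden2, mob]
  rw [sub_div' hd, div_div_div_cancel_right₀ hd, div_eq_iff hA]
  ring

lemma mob_differentiableAt {a z : ℂ} (ha : ‖a‖ < 1) (hz : ‖z‖ < 1) :
    DifferentiableAt ℂ (mob a) z := by
  apply DifferentiableAt.div
  · exact (differentiableAt_const a).sub differentiableAt_id
  · exact (differentiableAt_const 1).sub ((differentiableAt_const _).mul differentiableAt_id)
  · exact mob_den_ne ha hz

/-- Schwarz–Pick inequality on the unit disc -/
lemma schwarz_pick {Ψ : ℂ → ℂ} (hd : DifferentiableOn ℂ Ψ (ball 0 1))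
    (hm : MapsTo Ψ (ball 0 1) (ball 0 1)) {z w : ℂ}
    (hz : z ∈ ball (0:ℂ) 1) (hw : w ∈ ball (0:ℂ) 1) :
    ‖mob (Ψ w) (Ψ z)‖ ≤ ‖mob w z‖ := by
  simp only [mem_ball, dist_zero_right] at hz hw
  have hb : ‖Ψ w‖ < 1 := by
    have := hm (by simpa [mem_ball, dist_zero_right] using hw)
    simpa [mem_ball, dist_zero_right] using this
  set G : ℂ → ℂ := fun x => mob (Ψ w) (Ψ (mob w x)) with hG
  have hmem : ∀ x : ℂ, ‖x‖ < 1 → ‖Ψ (mob w x)‖ < 1 := by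
    intro x hx
    have := hm (by simpa [mem_ball, dist_zero_right] using mob_mem hw hx)
    simpa [mem_ball, dist_zero_right] using this
  have hGd : DifferentiableOn ℂ G (ball 0 1) := by
    intro x hx
    simp only [mem_ball, dist_zero_right] at hx
    have h1 : DifferentiableAt ℂ (mob w) x := mob_differentiableAt hw hx
    have h2 : DifferentiableAt ℂ Ψ (mob w x) :=
      hd.differentiableAt (isOpen_ball.mem_nhds (by simpa [mem_ball, dist_zero_right] using mob_mem hw hx))
    have h3 : DifferentiableAt ℂ (mob (Ψ w)) (Ψ (mob w x)) :=
      mob_differentiableAt hb (hmem x hx)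
    have : DifferentiableAt ℂ G x := by
      have := (h3.comp (mob w x) h2).comp x h1
      exact this
    exact this.differentiableWithinAt
  have hGm : MapsTo G (ball 0 1) (ball 0 1) := by
    intro x hx
    simp only [mem_ball, dist_zero_right] at hx ⊢
    exact mob_mem hb (hmem x hx)
  have hG0 : G 0 = 0 := by
    have : mob w 0 = w := by simp [mob]
    rw [hG]; simp only [this]
    exact mob_self _
  have key := Complex.norm_le_norm_of_mapsTo_ball hGd (hGm.mono_right ball_subset_closedBall) hG0
    (z := mob w z) (by exact mob_mem hw hz)
  have : G (mob w z) = mob (Ψ w) (Ψ z) := by rw [hG]; simp [mob_invol hw hz]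
  rw [this] at key
  simpa using key




/-- scaling by ρ contracts the pseudo-hyperbolic distance -/
lemma scale_aux {ρ : ℝ} (h0 : 0 < ρ) (h1 : ρ < 1) {ξ : ℂ} (hξ : normSq ξ ≤ 1) :
    ρ * ((1+ρ^2) * ‖1 - ξ‖) ≤ ρ * (2 * ‖(1:ℂ) - (ρ:ℂ)^2 * ξ‖) := by
  have key : ((1+ρ^2) * ‖1 - ξ‖)^2 ≤ (2 * ‖(1:ℂ) - (ρ:ℂ)^2 * ξ‖)^2 := by
    have e1 : ‖1 - ξ‖^2 = 1 - 2*ξ.re + normSq ξ := by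
      rw [Complex.sq_norm]
      simp [normSq_apply, sub_re, sub_im]; ring
    have e2 : ‖(1:ℂ) - (ρ:ℂ)^2 * ξ‖^2 = 1 - 2*ρ^2*ξ.re + ρ^4 * normSq ξ := by
      rw [Complex.sq_norm]
      simp [normSq_apply, sub_re, sub_im, mul_re, mul_im, ← Complex.ofReal_pow]; ring
    have hx2 : ξ.re^2 ≤ normSq ξ := by
      simp [normSq_apply]; nlinarith [sq_nonneg ξ.im]
    rw [mul_pow, mul_pow, e1, e2]
    nlinarith [mul_nonneg (mul_nonneg (le_of_lt (by nlinarith [pow_lt_one₀ (le_of_lt h0) h1 (by norm_num : 4 ≠ 0)] : (0:ℝ) < 1 - ρ^4))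
        (sub_nonneg.2 hξ)) (by norm_num : (0:ℝ) ≤ 2),
      mul_nonneg (sq_nonneg (1 - ρ^2)) (sq_nonneg (1 + ξ.re)),
      mul_nonneg (sq_nonneg (1 - ρ^2)) (sub_nonneg.2 hx2)]
  have ha : 0 ≤ (1+ρ^2) * ‖1 - ξ‖ := by positivity
  have hb : 0 ≤ 2 * ‖(1:ℂ) - (ρ:ℂ)^2 * ξ‖ := by positivity
  have : (1+ρ^2) * ‖1 - ξ‖ ≤ 2 * ‖(1:ℂ) - (ρ:ℂ)^2 * ξ‖ := by nlinarith
  nlinarith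



lemma mob_eq (a z : ℂ) : mob a z = (a - z) / (1 - (starRingEnd ℂ) a * z) := rfl

section Phi
variable (t : ℝ) (θ : ℂ)

def Phi (w : ℂ) : ℂ := Complex.exp (2*I*θ - (2*t : ℝ) * ((1-w)/(1+w)))

variable {t : ℝ} {θ : ℂ}

lemma one_add_ne {w : ℂ} (hw : ‖w‖ < 1) : 1 + w ≠ 0 := by
  intro h
  have : w = -1 := by linear_combination h
  rw [this] at hw; simp at hw

lemma re_div_eq {w : ℂ} (hw : ‖w‖ < 1) :
    ((1-w)/(1+w)).re = (1 - normSq w) / normSq (1+w) := by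
  rw [Complex.div_re]
  have : (1-w).re * (1+w).re + (1-w).im * (1+w).im = 1 - normSq w := by
    simp [normSq_apply]; ring
  rw [← add_div, this]

lemma re_div_pos {w : ℂ} (hw : ‖w‖ < 1) : 0 < ((1-w)/(1+w)).re := by
  rw [re_div_eq hw]
  have h1 : normSq w < 1 := normSq_lt_one hw
  have h2 : 0 < normSq (1+w) := normSq_pos.2 (one_add_ne hw)
  exact div_pos (by linarith) h2

lemma Phi_norm_lt (ht : 0 < t) {w : ℂ} (hw : ‖w‖ < 1) : ‖Phi t θ w‖ < Real.exp (-2*θ.im) := by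
  rw [Phi, Complex.norm_exp, Real.exp_lt_exp]
  have h1 : (2*I*θ - (2*t : ℝ) * ((1-w)/(1+w))).re
      = -2*θ.im - (2*t) * ((1-w)/(1+w)).re := by
    simp [Complex.sub_re, Complex.mul_re, Complex.I_re, Complex.I_im]
  rw [h1]
  nlinarith [re_div_pos hw]

lemma Phi_diffAt {w : ℂ} (hw : ‖w‖ < 1) : DifferentiableAt ℂ (Phi t θ) w := by
  apply DifferentiableAt.cexp
  apply DifferentiableAt.sub (differentiableAt_const _)
  apply DifferentiableAt.mul (differentiableAt_const _)
  exact DifferentiableAt.div ((differentiableAt_const _).sub differentiableAt_id)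
    ((differentiableAt_const _).add differentiableAt_id) (one_add_ne hw)


lemma scale_mob {ρ : ℝ} (h0 : 0 < ρ) (h1 : ρ < 1) {u v : ℂ} (hu : ‖u‖ < 1) (hv : ‖v‖ < 1) :
    ‖mob ((ρ:ℂ)*v) ((ρ:ℂ)*u)‖ ≤ (2*ρ/(1+ρ^2)) * ‖mob v u‖ := by
  have hρu : ‖(ρ:ℂ)*u‖ < 1 := by
    rw [norm_mul, Complex.norm_real]; rw [Real.norm_eq_abs, abs_of_pos h0]
    nlinarith [norm_nonneg u]
  have hρv : ‖(ρ:ℂ)*v‖ < 1 := by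
    rw [norm_mul, Complex.norm_real]; rw [Real.norm_eq_abs, abs_of_pos h0]
    nlinarith [norm_nonneg v]
  have hden1 : 1 - (starRingEnd ℂ) v * u ≠ 0 := mob_den_ne hv hu
  have hden2 : 1 - (starRingEnd ℂ) ((ρ:ℂ)*v) * ((ρ:ℂ)*u) ≠ 0 := mob_den_ne hρv hρu
  have hconj : (starRingEnd ℂ) ((ρ:ℂ)*v) * ((ρ:ℂ)*u)
      = (ρ:ℂ)^2 * ((starRingEnd ℂ) v * u) := by
    simp [map_mul, Complex.conj_ofReal]; ring
  set ξ := (starRingEnd ℂ) v * u with hξdef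
  have hξ : normSq ξ ≤ 1 := by
    have : normSq ξ = normSq v * normSq u := by
      rw [hξdef, normSq_mul, normSq_conj]
    rw [this]
    have h1 := normSq_lt_one hu
    have h2 := normSq_lt_one hv
    nlinarith [normSq_nonneg u, normSq_nonneg v]
  rw [hconj] at hden2
  rw [mob_eq, mob_eq, hconj, norm_div, norm_div]
  have hnum : ‖(ρ:ℂ)*v - (ρ:ℂ)*u‖ = ρ * ‖v - u‖ := by
    rw [show (ρ:ℂ)*v - (ρ:ℂ)*u = (ρ:ℂ)*(v-u) by ring, norm_mul, Complex.norm_real,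
      Real.norm_eq_abs, abs_of_pos h0]
  rw [hnum]
  have hd1 : (0:ℝ) < ‖1 - ξ‖ := norm_pos_iff.2 hden1
  have hd2 : (0:ℝ) < ‖1 - (ρ:ℂ)^2*ξ‖ := norm_pos_iff.2 hden2
  rw [show (2*ρ/(1+ρ^2)) * (‖v-u‖/‖1-ξ‖) = (2*ρ/(1+ρ^2) * ‖v-u‖)/‖1-ξ‖ by ring]
  rw [div_le_div_iff₀ hd2 hd1]
  have key := scale_aux h0 h1 hξ
  have hρpos : (0:ℝ) < 1 + ρ^2 := by positivity
  calc ρ * ‖v - u‖ * ‖1 - ξ‖ = ‖v-u‖ * (ρ * ‖1-ξ‖) := by ring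
    _ ≤ ‖v-u‖ * (2*ρ/(1+ρ^2) * ‖1 - (ρ:ℂ)^2*ξ‖) := by
        apply mul_le_mul_of_nonneg_left _ (norm_nonneg _)
        rw [div_mul_eq_mul_div, le_div_iff₀ hρpos]
        nlinarith [key]
    _ = 2*ρ/(1+ρ^2) * ‖v-u‖ * ‖1 - (ρ:ℂ)^2*ξ‖ := by ring

lemma Phi_contract (ht : 0 < t) (hθ : 0 < θ.im) {z w : ℂ} (hz : ‖z‖ < 1) (hw : ‖w‖ < 1) :
    ‖mob (Phi t θ w) (Phi t θ z)‖
      ≤ (2*Real.exp (-2*θ.im)/(1+Real.exp (-2*θ.im)^2)) * ‖mob w z‖ := by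
  set ρ := Real.exp (-2*θ.im) with hρdef
  have hρ0 : 0 < ρ := Real.exp_pos _
  have hρ1 : ρ < 1 := by
    rw [hρdef, Real.exp_lt_one_iff]; nlinarith
  set Ψ : ℂ → ℂ := fun x => Phi t θ x / ρ with hΨ
  have hΨm : MapsTo Ψ (ball 0 1) (ball 0 1) := by
    intro x hx
    simp only [mem_ball, dist_zero_right] at hx ⊢
    rw [hΨ]; simp only [norm_div, Complex.norm_real, Real.norm_eq_abs, abs_of_pos hρ0]
    rw [div_lt_one hρ0]
    exact Phi_norm_lt ht hx
  have hΨd : DifferentiableOn ℂ Ψ (ball 0 1) := by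
    intro x hx
    simp only [mem_ball, dist_zero_right] at hx
    exact ((Phi_diffAt hx).div_const _).differentiableWithinAt
  have hsp := schwarz_pick hΨd hΨm (z := z) (w := w)
    (by simpa [mem_ball, dist_zero_right] using hz)
    (by simpa [mem_ball, dist_zero_right] using hw)
  have hΨu : ‖Ψ z‖ < 1 := by
    have := hΨm (by simpa [mem_ball, dist_zero_right] using hz)
    simpa [mem_ball, dist_zero_right] using this
  have hΨv : ‖Ψ w‖ < 1 := by
    have := hΨm (by simpa [mem_ball, dist_zero_right] using hw)
    simpa [mem_ball, dist_zero_right] using this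
  have hρne : (ρ:ℂ) ≠ 0 := Complex.ofReal_ne_zero.2 (ne_of_gt hρ0)
  have hPhiz : Phi t θ z = (ρ:ℂ) * Ψ z := by
    rw [hΨ]; field_simp
  have hPhiw : Phi t θ w = (ρ:ℂ) * Ψ w := by
    rw [hΨ]; field_simp
  calc ‖mob (Phi t θ w) (Phi t θ z)‖ = ‖mob ((ρ:ℂ) * Ψ w) ((ρ:ℂ) * Ψ z)‖ := by
        rw [hPhiz, hPhiw]
    _ ≤ (2*ρ/(1+ρ^2)) * ‖mob (Ψ w) (Ψ z)‖ := scale_mob hρ0 hρ1 hΨu hΨv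
    _ ≤ (2*ρ/(1+ρ^2)) * ‖mob w z‖ := by
        apply mul_le_mul_of_nonneg_left hsp
        positivity


lemma exists_fixed (ht : 0 < t) (hθ : 0 < θ.im) : ∃ w : ℂ, ‖w‖ < 1 ∧ Phi t θ w = w := by
  set ρ := Real.exp (-2*θ.im) with hρdef
  have hρ0 : 0 < ρ := Real.exp_pos _
  have hρ1 : ρ < 1 := by rw [hρdef, Real.exp_lt_one_iff]; nlinarith
  set k := 2*ρ/(1+ρ^2) with hkdef
  have hk0 : 0 ≤ k := by positivity
  have hk1 : k < 1 := by
    rw [hkdef, div_lt_one (by positivity)]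
    nlinarith [mul_pos (sub_pos.2 hρ1) (sub_pos.2 hρ1)]
  set a : ℕ → ℂ := fun n => (Phi t θ)^[n] 0 with ha
  have hsucc : ∀ n, a (n+1) = Phi t θ (a n) := by
    intro n; rw [ha]; simp [Function.iterate_succ_apply']
  have hmem : ∀ n, ‖a n‖ < 1 := by
    intro n; induction n with
    | zero => simp [ha]
    | succ n ih => rw [hsucc n]; exact lt_trans (Phi_norm_lt ht ih) hρ1
  have hd : ∀ n, ‖mob (a n) (a (n+1))‖ ≤ k^n := by
    intro n; induction n with
    | zero =>
      have : mob (a 0) (a 1) = -(a 1) := by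
        rw [mob_eq]; simp [ha]
      rw [this, pow_zero, norm_neg]
      exact le_of_lt (hmem 1)
    | succ n ih =>
      rw [hsucc n, hsucc (n+1), pow_succ, mul_comm (k^n) k]
      calc ‖mob (Phi t θ (a n)) (Phi t θ (a (n+1)))‖
          ≤ k * ‖mob (a n) (a (n+1))‖ := Phi_contract ht hθ (hmem (n+1)) (hmem n)
        _ ≤ k * k^n := mul_le_mul_of_nonneg_left ih hk0
  have hcauchy : CauchySeq a := by
    apply cauchySeq_of_le_geometric k 2 hk1
    intro n
    have hrel : a n - a (n+1) = mob (a n) (a (n+1)) * (1 - (starRingEnd ℂ) (a n) * (a (n+1))) := by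
      rw [mob_eq, div_mul_cancel₀]
      exact mob_den_ne (hmem n) (hmem (n+1))
    rw [dist_eq_norm, hrel, norm_mul]
    have h2 : ‖1 - (starRingEnd ℂ) (a n) * (a (n+1))‖ ≤ 2 := by
      calc ‖1 - (starRingEnd ℂ) (a n) * (a (n+1))‖
          ≤ ‖(1:ℂ)‖ + ‖(starRingEnd ℂ) (a n) * (a (n+1))‖ := norm_sub_le _ _
        _ ≤ 1 + 1 := by
            rw [norm_one, norm_mul, RCLike.norm_conj]
            have h3 : ‖a n‖ * ‖a (n+1)‖ ≤ 1 := by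
              nlinarith [hmem n, hmem (n+1), norm_nonneg (a n), norm_nonneg (a (n+1))]
            linarith
        _ = 2 := by norm_num
    calc ‖mob (a n) (a (n+1))‖ * ‖1 - (starRingEnd ℂ) (a n) * (a (n+1))‖
        ≤ k^n * 2 := by
          apply mul_le_mul (hd n) h2 (norm_nonneg _) (by positivity)
      _ = 2 * k^n := by ring
  obtain ⟨l, hl⟩ := cauchySeq_tendsto_of_complete hcauchy
  have hlρ : ‖l‖ ≤ ρ := by
    apply le_of_tendsto hl.norm
    rw [Filter.eventually_atTop]
    refine ⟨1, fun n hn => ?_⟩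
    obtain ⟨m, rfl⟩ := Nat.exists_eq_add_of_le hn
    rw [add_comm, hsucc m]
    exact le_of_lt (Phi_norm_lt ht (hmem m))
  have hl1 : ‖l‖ < 1 := lt_of_le_of_lt hlρ hρ1
  refine ⟨l, hl1, ?_⟩
  have h1 : Filter.Tendsto (fun n => Phi t θ (a n)) Filter.atTop (nhds (Phi t θ l)) :=
    ((Phi_diffAt hl1).continuousAt).tendsto.comp hl
  have h2 : Filter.Tendsto (fun n => a (n+1)) Filter.atTop (nhds l) :=
    hl.comp (Filter.tendsto_add_atTop_nat 1)
  have h3 : (fun n => Phi t θ (a n)) = fun n => a (n+1) := funext fun n => (hsucc n).symm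
  rw [h3] at h1
  exact tendsto_nhds_unique h1 h2

lemma fixed_unique (ht : 0 < t) (hθ : 0 < θ.im) {z w : ℂ} (hz : ‖z‖ < 1) (hw : ‖w‖ < 1)
    (hfz : Phi t θ z = z) (hfw : Phi t θ w = w) : z = w := by
  set ρ := Real.exp (-2*θ.im) with hρdef
  have hρ0 : 0 < ρ := Real.exp_pos _
  have hρ1 : ρ < 1 := by rw [hρdef, Real.exp_lt_one_iff]; nlinarith
  have hk1 : 2*ρ/(1+ρ^2) < 1 := by
    rw [div_lt_one (by positivity)]
    nlinarith [mul_pos (sub_pos.2 hρ1) (sub_pos.2 hρ1)]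
  have hcon := Phi_contract ht hθ hz hw
  rw [hfz, hfw] at hcon
  have hm0 : ‖mob w z‖ = 0 := by
    nlinarith [norm_nonneg (mob w z)]
  have : mob w z = 0 := norm_eq_zero.1 hm0
  rw [mob_eq] at this
  have hne := mob_den_ne hw hz
  have := (div_eq_zero_iff.1 this).resolve_right hne
  linear_combination -this

lemma exp_norm_lt {ζ : ℂ} (him : 0 < ζ.im) : ‖Complex.exp (2*I*ζ)‖ < 1 := by
  rw [Complex.norm_exp, Real.exp_lt_one_iff]
  have : (2*I*ζ).re = -2*ζ.im := by
    simp [Complex.mul_re, Complex.I_re, Complex.I_im]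
  rw [this]; linarith

lemma zero_to_rep (ht : 0 < t) {ζ : ℂ} (him : 0 < ζ.im)
    (hz : (ζ - θ) * Complex.cos ζ - ↑t * Complex.sin ζ = 0) :
    ζ = θ + I*↑t*(1-Complex.exp (2*I*ζ))/(1+Complex.exp (2*I*ζ)) ∧
      Phi t θ (Complex.exp (2*I*ζ)) = Complex.exp (2*I*ζ) := by
  have hwlt : ‖Complex.exp (2*I*ζ)‖ < 1 := exp_norm_lt him
  set w := Complex.exp (2*I*ζ) with hwdef
  have hw1 : 1 + w ≠ 0 := one_add_ne hwlt
  have hE := (zero_iff t θ ζ).1 hz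
  have hrel : I*(ζ-θ)*(1+w) = ↑t*(w-1) := by linear_combination -hE
  have hζθ : ζ - θ = I*↑t*(1-w)/(1+w) := by
    rw [eq_div_iff hw1]
    linear_combination (-I)*hrel + ((ζ-θ)*(1+w))*Complex.I_sq
  constructor
  · linear_combination hζθ
  · rw [Phi]
    have harg : 2*I*θ - ((2*t : ℝ):ℂ)*((1-w)/(1+w)) = 2*I*ζ := by
      push_cast
      linear_combination (-2*I)*hζθ + (-2*(t:ℂ)*((1-w)/(1+w)))*Complex.I_sq
    rw [harg]

set_option maxHeartbeats 1000000 in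
lemma rep_to_zero (ht : 0 < t) (hθ : 0 < θ.im) {w : ℂ} (hwlt : ‖w‖ < 1)
    (hfix : Phi t θ w = w) :
    0 < (θ + I*↑t*(1-w)/(1+w)).im ∧
      ((θ + I*↑t*(1-w)/(1+w)) - θ) * Complex.cos (θ + I*↑t*(1-w)/(1+w))
        - ↑t * Complex.sin (θ + I*↑t*(1-w)/(1+w)) = 0 := by
  have hw1 : 1 + w ≠ 0 := one_add_ne hwlt
  set ζ := θ + I*↑t*(1-w)/(1+w) with hζdef
  have hζθ : ζ - θ = I*↑t*(1-w)/(1+w) := by rw [hζdef]; ring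
  have him : 0 < ζ.im := by
    have h1 : ζ = θ + I*(↑t*((1-w)/(1+w))) := by rw [hζdef]; ring
    rw [h1, Complex.add_im, Complex.I_mul_im, Complex.re_ofReal_mul]
    have := re_div_pos hwlt
    nlinarith
  have harg : 2*I*ζ = 2*I*θ - ((2*t : ℝ):ℂ)*((1-w)/(1+w)) := by
    push_cast
    linear_combination (2*I)*hζθ + (2*(t:ℂ)*((1-w)/(1+w)))*Complex.I_sq
  have hexp : Complex.exp (2*I*ζ) = w := by
    rw [harg, ← Phi, hfix]
  refine ⟨him, ?_⟩
  rw [zero_iff, hexp]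
  have hI : I*(I*↑t*(1-w)/(1+w)) = -(↑t*(1-w)/(1+w)) := by
    linear_combination ((t:ℂ)*(1-w)/(1+w))*Complex.I_sq
  rw [hζθ, hI]
  have hinv : (1+w)*(1+w)⁻¹ = 1 := mul_inv_cancel₀ hw1
  linear_combination ((t:ℂ)*(1-w))*hinv

lemma upper_exists_unique (ht : 0 < t) (hθ : 0 < θ.im) :
    ∃! ζ : ℂ, 0 < ζ.im ∧ (ζ - θ) * Complex.cos ζ - ↑t * Complex.sin ζ = 0 := by
  obtain ⟨w, hw, hfix⟩ := exists_fixed ht hθ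
  obtain ⟨him, hzero⟩ := rep_to_zero ht hθ hw hfix
  refine ⟨θ + I*↑t*(1-w)/(1+w), ?_, ?_⟩
  · exact ⟨him, hzero⟩
  · rintro ζ' ⟨him', hz'⟩
    obtain ⟨hrep', hfix'⟩ := zero_to_rep ht him' hz'
    have hweq : Complex.exp (2*I*ζ') = w := fixed_unique ht hθ (exp_norm_lt him') hw hfix' hfix
    rw [hweq] at hrep'
    exact hrep'

lemma deriv_ne (ht : 0 < t) (hθ : 0 < θ.im) {ζ₀ : ℂ} (him : 0 < ζ₀.im)
    (hz : (ζ₀ - θ) * Complex.cos ζ₀ - ↑t * Complex.sin ζ₀ = 0) :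
    deriv (fun ζ : ℂ => (ζ - θ) * Complex.cos ζ - ↑t * Complex.sin ζ) ζ₀ ≠ 0 := by
  -- compute the derivative
  have h1 : HasDerivAt (fun ζ : ℂ => (ζ - θ) * Complex.cos ζ)
      (1 * Complex.cos ζ₀ + (ζ₀ - θ) * (-Complex.sin ζ₀)) ζ₀ :=
    ((hasDerivAt_id ζ₀).sub_const θ).mul (Complex.hasDerivAt_cos ζ₀)
  have h2 : HasDerivAt (fun ζ : ℂ => (t:ℂ) * Complex.sin ζ) ((t:ℂ) * Complex.cos ζ₀) ζ₀ :=
    (Complex.hasDerivAt_sin ζ₀).const_mul (t:ℂ)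
  have hF : deriv (fun ζ : ℂ => (ζ - θ) * Complex.cos ζ - ↑t * Complex.sin ζ) ζ₀ = _ :=
    (h1.sub h2).deriv
  rw [hF]
  set D := 1 * Complex.cos ζ₀ + (ζ₀ - θ) * (-Complex.sin ζ₀) - (t:ℂ) * Complex.cos ζ₀ with hD
  -- exponential variables
  set q := Complex.exp (ζ₀*I) with hq
  set b := Complex.exp (-ζ₀*I) with hb
  have hqb : q*b = 1 := by rw [hq, hb, ← Complex.exp_add]; simp
  have hw : Complex.exp (2*I*ζ₀) = q*q := by
    rw [hq, ← Complex.exp_add]; congr 1; ring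
  have hE := (zero_iff t θ ζ₀).1 hz
  rw [hw] at hE
  have h0 : I*(ζ₀-θ)*(q*q+1) = ↑t*(q*q-1) := by linear_combination -hE
  have hcos : Complex.cos ζ₀ = (q+b)/2 := by rw [Complex.cos]
  have hsin : Complex.sin ζ₀ = (b-q)*I/2 := by rw [Complex.sin]
  have identity : D*(2*q*(q*q+1)) = (q*q+1)^2 - 4*(t:ℂ)*(q*q) := by
    rw [hD, hcos, hsin]
    linear_combination (q*q - q*b) * h0 + ((1-(t:ℂ))*(q*q+1) - t*(q*q-1)) * hqb
  -- norm estimate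
  have hwlt : ‖q*q‖ < 1 := by rw [← hw]; exact exp_norm_lt him
  have hw1 : 1 + q*q ≠ 0 := one_add_ne hwlt
  have hrep := (zero_to_rep ht him hz).1
  rw [hw] at hrep
  have hyim : ζ₀.im = θ.im + t * ((1-q*q)/(1+q*q)).re := by
    have h1' : ζ₀ = θ + I*(↑t*((1-q*q)/(1+q*q))) := by rw [hrep]; ring
    rw [h1', Complex.add_im, Complex.I_mul_im, Complex.re_ofReal_mul]
  set y := ζ₀.im with hy
  set m := normSq (q*q) with hm
  set N := normSq (1+q*q) with hN
  have hmN : ((1-q*q)/(1+q*q)).re = (1-m)/N := re_div_eq hwlt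
  have hNpos : 0 < N := normSq_pos.2 hw1
  have hm1 : m < 1 := normSq_lt_one hwlt
  have hA : ‖q*q‖ = Real.exp (-(2*y)) := by
    rw [← hw, Complex.norm_exp]
    congr 1
    simp [Complex.mul_re, Complex.I_re, Complex.I_im, hy]
  have hmA : m = Real.exp (-(2*y))^2 := by
    rw [hm, ← Complex.sq_norm, hA]
  have hkey : 4*t*‖q*q‖ < N := by
    set A := Real.exp (-(2*y)) with hAdef
    have hApos : 0 < A := Real.exp_pos _
    have hAE : A * Real.exp (2*y) = 1 := by
      rw [hAdef, ← Real.exp_add]; simp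
    have hypos : 0 < y := him
    have hsinh : 2*y ≤ Real.sinh (2*y) := by
      rw [Real.self_le_sinh_iff]; linarith
    have hsinh2 : Real.sinh (2*y) = (Real.exp (2*y) - A)/2 := by
      rw [Real.sinh_eq, hAdef]
    have hts : t * (1-m) = (y - θ.im) * N := by
      have := hyim
      rw [hmN] at this
      field_simp at this
      linarith
    rw [hA]
    -- goal : 4*t*A < N
    have h4 : 4*A*(y - θ.im) < 1 - A^2 := by
      have hE2 : 4*y ≤ Real.exp (2*y) - A := by
        rw [hsinh2] at hsinh; linarith
      nlinarith [hApos, hθ, mul_le_mul_of_nonneg_left hE2 (le_of_lt hApos)]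
    nlinarith [hNpos, hm1, hApos, hmA]
  -- conclude
  have hne : (q*q+1)^2 - 4*(t:ℂ)*(q*q) ≠ 0 := by
    intro h
    have heq : (q*q+1)^2 = 4*(t:ℂ)*(q*q) := by linear_combination h
    have hnorm : ‖(q*q+1)^2‖ = ‖4*(t:ℂ)*(q*q)‖ := by rw [heq]
    rw [norm_pow, norm_mul, norm_mul] at hnorm
    have e1 : ‖q*q+1‖^2 = N := by
      rw [hN, ← Complex.sq_norm]
      congr 1
      rw [add_comm]
    have e2 : ‖(4:ℂ)‖ = 4 := by norm_num
    have e3 : ‖(t:ℂ)‖ = t := by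
      rw [Complex.norm_real, Real.norm_eq_abs, abs_of_pos ht]
    rw [e1, e2, e3] at hnorm
    nlinarith [hkey]
  intro hD0
  rw [hD0, zero_mul] at identity
  exact hne identity.symm

end Phi
/-- log is 2-Lipschitz on the closed ball of radius 1/2 around 1 -/
lemma log_lip {x y : ℂ} (hx : x ∈ closedBall (1:ℂ) (1/2)) (hy : y ∈ closedBall (1:ℂ) (1/2)) :
    ‖Complex.log x - Complex.log y‖ ≤ 2 * ‖x - y‖ := by
  have key : ∀ z ∈ closedBall (1:ℂ) (1/2), HasFDerivWithinAt Complex.log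
      (ContinuousLinearMap.smulRight (1 : ℂ →L[ℂ] ℂ) z⁻¹) (closedBall (1:ℂ) (1/2)) z := by
    intro z hz
    rw [mem_closedBall, dist_eq_norm] at hz
    have hre : (1:ℝ)/2 ≤ z.re := by
      have h1 : |z.re - 1| ≤ ‖z - 1‖ := by
        have := Complex.abs_re_le_norm (z - 1)
        simpa [Complex.sub_re] using this
      have := abs_le.1 h1
      linarith [this.1]
    have hslit : z ∈ Complex.slitPlane := Complex.mem_slitPlane_iff.2 (Or.inl (by linarith))
    exact (Complex.hasDerivAt_log hslit).hasFDerivAt.hasFDerivWithinAt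
  have bound : ∀ z ∈ closedBall (1:ℂ) (1/2),
      ‖ContinuousLinearMap.smulRight (1 : ℂ →L[ℂ] ℂ) z⁻¹‖ ≤ 2 := by
    intro z hz
    rw [mem_closedBall, dist_eq_norm] at hz
    have hznorm : (1:ℝ)/2 ≤ ‖z‖ := by
      have h2 := norm_sub_norm_le (1:ℂ) (1 - z)
      rw [norm_one, sub_sub_cancel, norm_sub_rev] at h2
      linarith
    rw [ContinuousLinearMap.norm_smulRight_apply, norm_one, one_mul, norm_inv]
    rw [inv_le_comm₀ (by linarith) (by norm_num)]
    linarith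
  have := (convex_closedBall (1:ℂ) (1/2)).norm_image_sub_le_of_norm_hasFDerivWithin_le
    key bound hy hx
  exact this

def dd (t : ℝ) (θ ζ : ℂ) : ℂ := I*(ζ-θ) - t
def uu (t : ℝ) (θ ζ : ℂ) : ℂ := 2*t / dd t θ ζ
def cc (n : ℕ) : ℂ := ((π/2 + n*π : ℝ) : ℂ)
def hh (t : ℝ) (θ : ℂ) (n : ℕ) (ζ : ℂ) : ℂ := cc n + (2*I)⁻¹ * Complex.log (1 + uu t θ ζ)

lemma dd_lb {t : ℝ} (ht : 0 < t) (θ : ℂ) {n : ℕ} (hn : t + ‖θ‖ + 2 + 4*t + 1 ≤ (n:ℝ))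
    {ζ : ℂ} (hζ : ζ ∈ closedBall (cc n) (1/2)) : 4*t + 1 ≤ ‖dd t θ ζ‖ := by
  rw [mem_closedBall, dist_eq_norm] at hζ
  have hπ := Real.pi_gt_three
  have hc : ‖cc n‖ = π/2 + n*π := by
    rw [cc, Complex.norm_real, Real.norm_eq_abs, abs_of_pos (by positivity)]
  have hζn : π/2 + n*π - 1/2 ≤ ‖ζ‖ := by
    have h4 := norm_sub_norm_le (cc n) ζ
    rw [norm_sub_rev, hc] at h4
    linarith
  have h3n : 3*(n:ℝ) ≤ n*π := by
    have : (0:ℝ) ≤ (n:ℝ) := Nat.cast_nonneg n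
    nlinarith
  have hd1 : ‖ζ - θ‖ - t ≤ ‖dd t θ ζ‖ := by
    have := norm_sub_norm_le (I*(ζ-θ)) ((t:ℝ):ℂ)
    rw [norm_mul, Complex.norm_I, one_mul, Complex.norm_real, Real.norm_eq_abs,
      abs_of_pos ht] at this
    exact le_trans (by linarith) this
  have hd2 : ‖ζ‖ - ‖θ‖ ≤ ‖ζ - θ‖ := by
    have := norm_sub_norm_le ζ θ
    linarith
  linarith

lemma zero_near {t : ℝ} (ht : 0 < t) (θ : ℂ) {n : ℕ} (hn : t + ‖θ‖ + 2 + 4*t + 1 ≤ (n:ℝ)) :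
    ∃ ζ ∈ closedBall (cc n) (1/2),
      (ζ - θ) * Complex.cos ζ - ↑t * Complex.sin ζ = 0 := by
  have hI2 : (2*I : ℂ) ≠ 0 := by simp [Complex.I_ne_zero]
  have hdd_ne : ∀ ζ ∈ closedBall (cc n) (1/2), dd t θ ζ ≠ 0 := by
    intro ζ hζ h0
    have := dd_lb ht θ hn hζ
    rw [h0, norm_zero] at this
    linarith
  have hu_le : ∀ ζ ∈ closedBall (cc n) (1/2), ‖uu t θ ζ‖ ≤ 1/2 := by
    intro ζ hζ
    have hlb := dd_lb ht θ hn hζ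
    rw [uu, norm_div]
    rw [div_le_iff₀ (by linarith : (0:ℝ) < ‖dd t θ ζ‖)]
    have h2t : ‖(2*t : ℂ)‖ = 2*t := by
      rw [show (2*t : ℂ) = ((2*t : ℝ) : ℂ) by push_cast; ring, Complex.norm_real,
        Real.norm_eq_abs, abs_of_pos (by linarith)]
    rw [show (2:ℂ)*(t:ℝ) = (2*t : ℂ) by push_cast; ring, h2t]
    linarith
  have hu_ne : ∀ ζ ∈ closedBall (cc n) (1/2), 1 + uu t θ ζ ≠ 0 := by
    intro ζ hζ h0
    have h1 : uu t θ ζ = -1 := by linear_combination h0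
    have := hu_le ζ hζ
    rw [h1] at this; simp at this; linarith
  have hnorm2I : ‖((2*I)⁻¹ : ℂ)‖ = 1/2 := by
    rw [norm_inv, norm_mul, Complex.norm_I, mul_one]
    norm_num
  have hmaps : ∀ ζ ∈ closedBall (cc n) (1/2), hh t θ n ζ ∈ closedBall (cc n) (1/2) := by
    intro ζ hζ
    rw [mem_closedBall, dist_eq_norm, hh, add_sub_cancel_left, norm_mul, hnorm2I]
    have hlog := Complex.norm_log_one_add_half_le_self (z := uu t θ ζ) (by
      simpa using hu_le ζ hζ)
    have := hu_le ζ hζ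
    nlinarith
  have hlip : ∀ ζ₁ ∈ closedBall (cc n) (1/2), ∀ ζ₂ ∈ closedBall (cc n) (1/2),
      dist (hh t θ n ζ₁) (hh t θ n ζ₂) ≤ (1/2) * dist ζ₁ ζ₂ := by
    intro ζ₁ h₁ ζ₂ h₂
    rw [dist_eq_norm, hh, hh]
    have e1 : cc n + (2*I)⁻¹ * Complex.log (1 + uu t θ ζ₁)
        - (cc n + (2*I)⁻¹ * Complex.log (1 + uu t θ ζ₂))
        = (2*I)⁻¹ * (Complex.log (1 + uu t θ ζ₁) - Complex.log (1 + uu t θ ζ₂)) := by ring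
    rw [e1, norm_mul, hnorm2I]
    have hmem1 : 1 + uu t θ ζ₁ ∈ closedBall (1:ℂ) (1/2) := by
      rw [mem_closedBall, dist_eq_norm, add_sub_cancel_left]
      exact hu_le ζ₁ h₁
    have hmem2 : 1 + uu t θ ζ₂ ∈ closedBall (1:ℂ) (1/2) := by
      rw [mem_closedBall, dist_eq_norm, add_sub_cancel_left]
      exact hu_le ζ₂ h₂
    have hlog := log_lip hmem1 hmem2
    rw [add_sub_add_left_eq_sub] at hlog
    have hudiff : ‖uu t θ ζ₁ - uu t θ ζ₂‖ ≤ (1/4) * ‖ζ₁ - ζ₂‖ := by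
      have hd1 := hdd_ne ζ₁ h₁
      have hd2 := hdd_ne ζ₂ h₂
      have e2 : uu t θ ζ₁ - uu t θ ζ₂
          = 2*(t:ℂ) * (I * (ζ₂ - ζ₁)) / (dd t θ ζ₁ * dd t θ ζ₂) := by
        rw [uu, uu, div_sub_div _ _ hd1 hd2, dd, dd]
        congr 1
        ring
      have hb1 := dd_lb ht θ hn h₁
      have hb2 := dd_lb ht θ hn h₂
      have ht' : ‖((t:ℝ):ℂ)‖ = t := by
        rw [Complex.norm_real, Real.norm_eq_abs, abs_of_pos ht]
      have h2' : ‖(2:ℂ)‖ = 2 := by norm_num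
      have hnum : ‖2*(t:ℂ) * (I * (ζ₂ - ζ₁))‖ = 2*t*‖ζ₁ - ζ₂‖ := by
        rw [norm_mul, norm_mul, norm_mul, Complex.norm_I, one_mul, h2', ht', norm_sub_rev]
      have hden : ‖dd t θ ζ₁ * dd t θ ζ₂‖ = ‖dd t θ ζ₁‖ * ‖dd t θ ζ₂‖ := norm_mul _ _
      rw [e2, norm_div, hnum, hden]
      rw [div_le_iff₀ (by nlinarith : (0:ℝ) < ‖dd t θ ζ₁‖ * ‖dd t θ ζ₂‖)]
      have hdd : (4*t+1)*(4*t+1) ≤ ‖dd t θ ζ₁‖ * ‖dd t θ ζ₂‖ :=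
        mul_le_mul hb1 hb2 (by linarith) (le_trans (by linarith) hb1)
      nlinarith [norm_nonneg (ζ₁ - ζ₂), mul_le_mul_of_nonneg_left hdd (norm_nonneg (ζ₁ - ζ₂)),
        mul_nonneg (norm_nonneg (ζ₁ - ζ₂)) (sq_nonneg (4*t))]
    rw [dist_eq_norm]
    nlinarith [norm_nonneg (ζ₁ - ζ₂)]
  -- Banach fixed point on the closed ball
  haveI : Nonempty (closedBall (cc n) (1/2) : Set ℂ) :=
    ⟨⟨cc n, mem_closedBall_self (by norm_num)⟩⟩
  haveI : CompleteSpace (closedBall (cc n) (1/2) : Set ℂ) :=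
    isClosed_closedBall.completeSpace_coe
  set g : (closedBall (cc n) (1/2) : Set ℂ) → (closedBall (cc n) (1/2) : Set ℂ) :=
    fun x => ⟨hh t θ n x.1, hmaps x.1 x.2⟩ with hg
  have hK : ((1/2 : ℝ≥0) : ℝ) = 1/2 := by norm_num
  have hgc : ContractingWith (1/2 : ℝ≥0) g := by
    constructor
    · rw [← NNReal.coe_lt_coe, hK]; norm_num
    · apply LipschitzWith.of_dist_le_mul
      intro x y
      rw [Subtype.dist_eq (g x) (g y), Subtype.dist_eq x y, hK]
      exact hlip x.1 x.2 y.1 y.2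
  have hx : g (ContractingWith.fixedPoint g hgc) = ContractingWith.fixedPoint g hgc :=
    hgc.fixedPoint_isFixedPt
  set x := ContractingWith.fixedPoint g hgc with hxdef
  have hfixeq : hh t θ n (x:ℂ) = (x:ℂ) := congrArg Subtype.val hx
  refine ⟨(x:ℂ), x.2, ?_⟩
  set ζ := (x:ℂ) with hζ
  have hune := hu_ne ζ x.2
  have hdne := hdd_ne ζ x.2
  have harg : 2*I*ζ = 2*I*(cc n) + Complex.log (1 + uu t θ ζ) := by
    have hc : (2*I : ℂ) * (2*I)⁻¹ = 1 := mul_inv_cancel₀ hI2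
    have hfix2 : cc n + (2*I)⁻¹ * Complex.log (1 + uu t θ ζ) = ζ := hfixeq
    linear_combination (2*I)*hfix2.symm + (Complex.log (1 + uu t θ ζ))*hc
  have hexpc : Complex.exp (2*I*(cc n)) = -1 := by
    have e3 : 2*I*(cc n) = ↑π*I + (n:ℕ)*(2*↑π*I) := by
      rw [cc]; push_cast; ring
    rw [e3, Complex.exp_add, Complex.exp_pi_mul_I, Complex.exp_nat_mul,
      Complex.exp_two_pi_mul_I, one_pow, mul_one]
  have hexp2I : Complex.exp (2*I*ζ) = -(1 + uu t θ ζ) := by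
    rw [harg, Complex.exp_add, hexpc, Complex.exp_log hune]
    ring
  rw [zero_iff t θ ζ, hexp2I]
  have hd_eq : dd t θ ζ = I*(ζ-θ) - t := rfl
  have hinv : dd t θ ζ * (dd t θ ζ)⁻¹ = 1 := mul_inv_cancel₀ hdne
  rw [uu, div_eq_mul_inv]
  linear_combination (2*t)*hinv + (-2*(t:ℂ)*(dd t θ ζ)⁻¹)*hd_eq

end Stmt15Aux

section
open Stmt15Aux Complex Metric Set Real

theorem stmt15 (t : ℝ) (ht : 0 < t) (θ : ℂ) (hθ : 0 < θ.im) :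
    {ζ : ℂ | (ζ - θ) * Complex.cos ζ - t * Complex.sin ζ = 0}.Infinite ∧
    {ζ : ℂ | ((ζ - θ) * Complex.cos ζ - t * Complex.sin ζ = 0) ∧ ζ.im ≤ 0}.Infinite ∧
    (∃! ζ₀ : ℂ, 0 < ζ₀.im ∧ (ζ₀ - θ) * Complex.cos ζ₀ - t * Complex.sin ζ₀ = 0) ∧
    (∀ ζ₀ : ℂ, 0 < ζ₀.im → (ζ₀ - θ) * Complex.cos ζ₀ - t * Complex.sin ζ₀ = 0 →
      deriv (fun ζ : ℂ => (ζ - θ) * Complex.cos ζ - t * Complex.sin ζ) ζ₀ ≠ 0) := by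
  have hinf : {ζ : ℂ | (ζ - θ) * Complex.cos ζ - ↑t * Complex.sin ζ = 0}.Infinite := by
    set N : ℕ := ⌈t + ‖θ‖ + 2 + 4*t + 1⌉₊ with hN
    have hbound : ∀ k : ℕ, t + ‖θ‖ + 2 + 4*t + 1 ≤ ((N + k : ℕ) : ℝ) := by
      intro k
      have h1 := Nat.le_ceil (t + ‖θ‖ + 2 + 4*t + 1)
      rw [← hN] at h1
      push_cast
      linarith [Nat.cast_nonneg (α := ℝ) k]
    have H : ∀ k : ℕ, ∃ ζ ∈ closedBall (cc (N+k)) (1/2),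
        (ζ - θ) * Complex.cos ζ - ↑t * Complex.sin ζ = 0 :=
      fun k => zero_near ht θ (hbound k)
    choose f hmem hzero using H
    apply Set.infinite_of_injective_forall_mem (f := f)
    · intro k l hkl
      by_contra hne
      have hdist : dist (cc (N+k)) (cc (N+l)) ≤ 1 := by
        have d1 := mem_closedBall.1 (hmem k)
        have d2 := mem_closedBall.1 (hmem l)
        rw [hkl] at d1
        calc dist (cc (N+k)) (cc (N+l)) ≤ dist (cc (N+k)) (f l) + dist (f l) (cc (N+l)) :=
              dist_triangle _ _ _
          _ ≤ 1/2 + 1/2 := add_le_add (by rw [dist_comm]; exact d1) d2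
          _ = 1 := by norm_num
      have hsep : (3:ℝ) ≤ dist (cc (N+k)) (cc (N+l)) := by
        rw [cc, cc, dist_eq_norm, ← Complex.ofReal_sub, Complex.norm_real, Real.norm_eq_abs]
        have e0 : (π/2 + ((N+k:ℕ):ℝ)*π) - (π/2 + ((N+l:ℕ):ℝ)*π)
            = (((N+k:ℕ):ℝ) - ((N+l:ℕ):ℝ))*π := by ring
        rw [e0, abs_mul, abs_of_pos Real.pi_pos]
        have e1 : ((N+k:ℕ):ℝ) - ((N+l:ℕ):ℝ) = (k:ℝ) - (l:ℝ) := by push_cast; ring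
        rw [e1]
        have h4 : ((k:ℤ)) ≠ ((l:ℤ)) := by exact_mod_cast hne
        have h5 := Int.one_le_abs (sub_ne_zero.2 h4)
        have h6 : (1:ℝ) ≤ |(k:ℝ) - (l:ℝ)| := by
          calc (1:ℝ) = ((1:ℤ):ℝ) := by norm_num
            _ ≤ ((|(k:ℤ) - (l:ℤ)|:ℤ):ℝ) := by exact_mod_cast h5
            _ = |(k:ℝ) - (l:ℝ)| := by push_cast; rfl
        nlinarith [Real.pi_gt_three, abs_nonneg ((k:ℝ) - (l:ℝ))]
      linarith
    · intro k
      exact hzero k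
  have huniq := upper_exists_unique ht hθ
  refine ⟨hinf, ?_, huniq, ?_⟩
  · obtain ⟨ζ₀, hζ₀, hun⟩ := huniq
    have hsub : {ζ : ℂ | (ζ - θ) * Complex.cos ζ - ↑t * Complex.sin ζ = 0} \ {ζ₀} ⊆
        {ζ : ℂ | ((ζ - θ) * Complex.cos ζ - ↑t * Complex.sin ζ = 0) ∧ ζ.im ≤ 0} := by
      rintro ζ ⟨h1, h2⟩
      refine ⟨h1, ?_⟩
      by_contra h3
      push_neg at h3
      exact h2 (by simpa using hun ζ ⟨h3, h1⟩)
    exact (hinf.diff (finite_singleton ζ₀)).mono hsub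
  · intro ζ₀ him hz
    exact deriv_ne ht hθ him hz

end
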